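/- Every element of {1,…,n} is exactly one of b_1,…,b_k or a+μ̄_a for a unique 1 ≤ a ≤ n−k; consequently the map f_{λ/μ} is well defined, and f_{λ/μ} is a (k,n)-bounded affine permutation. -/

import Mathlib

/-- The height `λ̄_a` of the `a`-th column (counted from the right) of the
partition `f = (f 1 ≥ ⋯ ≥ f k)` inside the `k × (n-k)` rectangle. -/
def colHeight (n k : ℕ) (f : ℕ → ℕ) (a : ℕ) : ℕ :=
  ((Finset.Icc 1 k).filter (fun i => n - k - a + 1 ≤ f i)).card

/-- `b_i = n - k - μ_i + i`. -/
def bvec (n k : ℕ) (m : ℕ → ℕ) (i : ℕ) : ℕ := n - k - m i + i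

/-- The short label `J(a,i) = {min (a+j-1) (b_j) : j = 1, …, i}`. -/
def shortLabel (n k : ℕ) (m : ℕ → ℕ) (a i : ℕ) : Finset ℕ :=
  (Finset.Icc 1 i).image (fun j => min (a + j - 1) (bvec n k m j))

/-- The label `I'(a,i) = J(a,i) ∪ {b_{i+1}, …, b_k}`. -/
def fullLabel (n k : ℕ) (m : ℕ → ℕ) (a i : ℕ) : Finset ℕ :=
  shortLabel n k m a i ∪ (Finset.Icc (i + 1) k).image (bvec n k m)

/-- `I_μ = {b_1, …, b_k}`. -/
def Imu (n k : ℕ) (m : ℕ → ℕ) : Finset ℕ := (Finset.Icc 1 k).image (bvec n k m)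

/-- The box `(a,i)` belongs to the skew diagram `λ/μ`. -/
def InSkew (n k : ℕ) (l m : ℕ → ℕ) (a i : ℕ) : Prop :=
  1 ≤ a ∧ a ≤ n - k ∧ 1 ≤ i ∧ i ≤ k ∧ colHeight n k m a < i ∧ i ≤ colHeight n k l a

/-- The box `(a,i)` belongs to the boundary ribbon `R(λ/μ)`. -/
def InRibbon (n k : ℕ) (l m : ℕ → ℕ) (a i : ℕ) : Prop :=
  InSkew n k l m a i ∧ (a = 1 ∨ colHeight n k l (a - 1) ≤ i)

/-- A `(k,n)`-bounded affine permutation. -/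
def IsBoundedAffinePerm (n k : ℕ) (f : ℤ → ℤ) : Prop :=
  Function.Bijective f ∧
  (∀ i : ℤ, f (i + n) = f i + n) ∧
  (∀ i : ℤ, i ≤ f i ∧ f i ≤ i + n) ∧
  (∑ i ∈ Finset.Icc (1 : ℤ) (n : ℤ), (f i - i)) = (n : ℤ) * (k : ℤ)

/-- The defining specification of the map `f_{λ/μ} : ℤ → ℤ`:
`f(a + μ̄_a) = a + λ̄_a`, `f(b_i) = (n - k - λ_i + i) + n`, and `n`-periodicity. -/
def IsSkewBAF (n k : ℕ) (l m : ℕ → ℕ) (f : ℤ → ℤ) : Prop :=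
  (∀ a : ℕ, 1 ≤ a → a ≤ n - k →
    f ((a + colHeight n k m a : ℕ) : ℤ) = ((a + colHeight n k l a : ℕ) : ℤ)) ∧
  (∀ i : ℕ, 1 ≤ i → i ≤ k →
    f ((bvec n k m i : ℕ) : ℤ) = ((n - k - l i + i : ℕ) : ℤ) + (n : ℤ)) ∧
  (∀ j : ℤ, f (j + (n : ℤ)) = f j + (n : ℤ))

namespace SkewAux

variable {n k : ℕ} {p l m : ℕ → ℕ}

lemma colHeight_le_k (n k : ℕ) (p : ℕ → ℕ) (a : ℕ) : colHeight n k p a ≤ k := by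
  have h := Finset.card_filter_le (Finset.Icc 1 k) (fun i => n - k - a + 1 ≤ p i)
  simpa [colHeight, Nat.card_Icc] using h

lemma colHeight_mono (n k : ℕ) (p : ℕ → ℕ) {a a' : ℕ} (h : a ≤ a') :
    colHeight n k p a ≤ colHeight n k p a' := by
  apply Finset.card_le_card
  intro x hx
  simp only [Finset.mem_filter, Finset.mem_Icc] at hx ⊢
  exact ⟨hx.1, by omega⟩

lemma colHeight_le_colHeight (n k : ℕ) {m l : ℕ → ℕ}
    (hml : ∀ i, 1 ≤ i → i ≤ k → m i ≤ l i) (a : ℕ) :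
    colHeight n k m a ≤ colHeight n k l a := by
  apply Finset.card_le_card
  intro x hx
  simp only [Finset.mem_filter, Finset.mem_Icc] at hx ⊢
  exact ⟨hx.1, le_trans hx.2 (hml x hx.1.1 hx.1.2)⟩

lemma le_colHeight_iff (hp : ∀ i j, 1 ≤ i → i ≤ j → j ≤ k → p j ≤ p i)
    {a i : ℕ} (hi1 : 1 ≤ i) (hik : i ≤ k) :
    i ≤ colHeight n k p a ↔ n - k - a + 1 ≤ p i := by
  unfold colHeight
  constructor
  · intro h
    by_contra hc
    push_neg at hc
    have hsub : (Finset.Icc 1 k).filter (fun j => n - k - a + 1 ≤ p j) ⊆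
        Finset.Icc 1 (i - 1) := by
      intro j hj
      simp only [Finset.mem_filter, Finset.mem_Icc] at hj ⊢
      refine ⟨hj.1.1, ?_⟩
      by_contra hji
      have hij : i ≤ j := by omega
      have := hp i j hi1 hij hj.1.2
      omega
    have hcard := Finset.card_le_card hsub
    rw [Nat.card_Icc] at hcard
    omega
  · intro h
    have hsub : Finset.Icc 1 i ⊆
        (Finset.Icc 1 k).filter (fun j => n - k - a + 1 ≤ p j) := by
      intro j hj
      simp only [Finset.mem_filter, Finset.mem_Icc] at hj ⊢
      exact ⟨⟨hj.1, le_trans hj.2 hik⟩, le_trans h (hp j i hj.1 hj.2 hik)⟩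
    have hcard := Finset.card_le_card hsub
    rw [Nat.card_Icc] at hcard
    omega

lemma disjoint_ab (hp : ∀ i j, 1 ≤ i → i ≤ j → j ≤ k → p j ≤ p i)
    {a i : ℕ} (ha1 : 1 ≤ a) (han : a ≤ n - k) (hi1 : 1 ≤ i) (hik : i ≤ k) :
    a + colHeight n k p a ≠ bvec n k p i := by
  intro heq
  unfold bvec at heq
  by_cases hc : n - k - a + 1 ≤ p i
  · have h1 : i ≤ colHeight n k p a := (le_colHeight_iff hp hi1 hik).2 hc
    omega
  · have h1 : ¬ i ≤ colHeight n k p a := fun h => hc ((le_colHeight_iff hp hi1 hik).1 h)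
    omega

lemma bvec_inj (hp : ∀ i j, 1 ≤ i → i ≤ j → j ≤ k → p j ≤ p i)
    {i j : ℕ} (hi1 : 1 ≤ i) (hik : i ≤ k) (hj1 : 1 ≤ j) (hjk : j ≤ k)
    (h : bvec n k p i = bvec n k p j) : i = j := by
  rcases lt_trichotomy i j with hij | hij | hij
  · have := hp i j hi1 hij.le hjk
    unfold bvec at h; omega
  · exact hij
  · have := hp j i hj1 hij.le hik
    unfold bvec at h; omega

lemma addCol_inj (n k : ℕ) (p : ℕ → ℕ) {a a' : ℕ}
    (h : a + colHeight n k p a = a' + colHeight n k p a') : a = a' := by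
  rcases lt_trichotomy a a' with haa | haa | haa
  · have := colHeight_mono n k p haa.le; omega
  · exact haa
  · have := colHeight_mono n k p haa.le; omega

lemma bvec_mem {i : ℕ} (hkn : k ≤ n) (hi1 : 1 ≤ i) (hik : i ≤ k) :
    1 ≤ bvec n k p i ∧ bvec n k p i ≤ n := by
  unfold bvec; omega

lemma addCol_mem {a : ℕ} (hkn : k ≤ n) (ha1 : 1 ≤ a) (han : a ≤ n - k) :
    1 ≤ a + colHeight n k p a ∧ a + colHeight n k p a ≤ n := by
  have := colHeight_le_k n k p a
  omega

lemma partition_disjoint (hp : ∀ i j, 1 ≤ i → i ≤ j → j ≤ k → p j ≤ p i) :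
    Disjoint ((Finset.Icc 1 k).image (bvec n k p))
      ((Finset.Icc 1 (n - k)).image (fun a => a + colHeight n k p a)) := by
  rw [Finset.disjoint_left]
  rintro x hx hx'
  simp only [Finset.mem_image, Finset.mem_Icc] at hx hx'
  obtain ⟨i, hi, rfl⟩ := hx
  obtain ⟨a, ha, hax⟩ := hx'
  exact disjoint_ab hp ha.1 ha.2 hi.1 hi.2 hax

lemma partition_union (hp : ∀ i j, 1 ≤ i → i ≤ j → j ≤ k → p j ≤ p i)
    (hkn : k ≤ n) :
    (Finset.Icc 1 k).image (bvec n k p) ∪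
      (Finset.Icc 1 (n - k)).image (fun a => a + colHeight n k p a) =
      Finset.Icc 1 n := by
  have hBcard : ((Finset.Icc 1 k).image (bvec n k p)).card = k := by
    rw [Finset.card_image_of_injOn, Nat.card_Icc]
    · omega
    · intro x hx y hy hxy
      simp only [Finset.coe_Icc, Set.mem_Icc] at hx hy
      exact bvec_inj hp hx.1 hx.2 hy.1 hy.2 hxy
  have hAcard : ((Finset.Icc 1 (n - k)).image (fun a => a + colHeight n k p a)).card
      = n - k := by
    rw [Finset.card_image_of_injOn, Nat.card_Icc]
    · omega
    · intro x hx y hy hxy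
      exact addCol_inj n k p hxy
  have hsub : (Finset.Icc 1 k).image (bvec n k p) ∪
      (Finset.Icc 1 (n - k)).image (fun a => a + colHeight n k p a) ⊆
      Finset.Icc 1 n := by
    intro x hx
    simp only [Finset.mem_union, Finset.mem_image, Finset.mem_Icc] at hx ⊢
    rcases hx with ⟨i, hi, rfl⟩ | ⟨a, ha, rfl⟩
    · exact bvec_mem hkn hi.1 hi.2
    · exact addCol_mem hkn ha.1 ha.2
  have hcard : ((Finset.Icc 1 k).image (bvec n k p) ∪
      (Finset.Icc 1 (n - k)).image (fun a => a + colHeight n k p a)).card = n := by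
    rw [Finset.card_union_of_disjoint (partition_disjoint hp), hBcard, hAcard]
    omega
  apply Finset.eq_of_subset_of_card_le hsub
  rw [hcard, Nat.card_Icc]
  omega

lemma partition_cases (hp : ∀ i j, 1 ≤ i → i ≤ j → j ≤ k → p j ≤ p i)
    (hkn : k ≤ n) {r : ℕ} (h1 : 1 ≤ r) (h2 : r ≤ n) :
    (∃ i, (1 ≤ i ∧ i ≤ k) ∧ bvec n k p i = r) ∨
      (∃ a, (1 ≤ a ∧ a ≤ n - k) ∧ a + colHeight n k p a = r) := by
  have hr : r ∈ Finset.Icc 1 n := Finset.mem_Icc.mpr ⟨h1, h2⟩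
  rw [← partition_union hp hkn, Finset.mem_union] at hr
  rcases hr with hr | hr <;> simp only [Finset.mem_image, Finset.mem_Icc] at hr
  · obtain ⟨i, hi, hir⟩ := hr
    exact Or.inl ⟨i, hi, hir⟩
  · obtain ⟨a, ha, har⟩ := hr
    exact Or.inr ⟨a, ha, har⟩

lemma sum_colHeight (hpb : ∀ i, 1 ≤ i → i ≤ k → p i ≤ n - k) :
    ∑ a ∈ Finset.Icc 1 (n - k), colHeight n k p a = ∑ i ∈ Finset.Icc 1 k, p i := by
  have h1 : ∀ i ∈ Finset.Icc 1 k,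
      ((Finset.Icc 1 (n - k)).filter (fun a => n - k - a + 1 ≤ p i)).card = p i := by
    intro i hi
    simp only [Finset.mem_Icc] at hi
    have hpi := hpb i hi.1 hi.2
    have heq : (Finset.Icc 1 (n - k)).filter (fun a => n - k - a + 1 ≤ p i) =
        Finset.Icc (n - k - p i + 1) (n - k) := by
      ext a
      simp only [Finset.mem_filter, Finset.mem_Icc]
      omega
    rw [heq, Nat.card_Icc]
    omega
  calc ∑ a ∈ Finset.Icc 1 (n - k), colHeight n k p a
      = ∑ a ∈ Finset.Icc 1 (n - k), ∑ i ∈ Finset.Icc 1 k,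
          if n - k - a + 1 ≤ p i then 1 else 0 := by
        refine Finset.sum_congr rfl fun a _ => ?_
        exact Finset.card_filter _ _
    _ = ∑ i ∈ Finset.Icc 1 k, ∑ a ∈ Finset.Icc 1 (n - k),
          if n - k - a + 1 ≤ p i then 1 else 0 := Finset.sum_comm
    _ = ∑ i ∈ Finset.Icc 1 k, p i := by
        refine Finset.sum_congr rfl fun i hi => ?_
        rw [← Finset.card_filter]
        exact h1 i hi

lemma periodic_mul {f : ℤ → ℤ} (hf : ∀ j : ℤ, f (j + n) = f j + n) (q : ℤ) :
    ∀ j : ℤ, f (j + n * q) = f j + n * q := by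
  induction q using Int.induction_on with
  | zero => simp
  | succ q ih =>
    intro j
    have h1 : j + (n : ℤ) * (q + 1) = (j + n * q) + n := by ring
    rw [h1, hf, ih]
    ring
  | pred q ih =>
    intro j
    have h1 : (j + (n : ℤ) * (-q - 1)) + n = j + n * (-q : ℤ) := by ring
    have h2 := hf (j + n * (-q - 1))
    rw [h1] at h2
    have h3 := ih j
    have : f (j + (n : ℤ) * (-q - 1)) = f (j + n * (-q : ℤ)) - n := by omega
    rw [this, h3]
    ring

lemma decomp (hn : 0 < n) (j : ℤ) :
    ∃ (r : ℕ) (q : ℤ), 1 ≤ r ∧ r ≤ n ∧ j = (r : ℤ) + n * q := by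
  have hn' : (n : ℤ) ≠ 0 := by exact_mod_cast hn.ne'
  have h1 : 0 ≤ (j - 1) % n := Int.emod_nonneg _ hn'
  have h2 : (j - 1) % n < n := Int.emod_lt_of_pos _ (by exact_mod_cast hn)
  have h3 := Int.mul_ediv_add_emod (j - 1) n
  refine ⟨((j - 1) % n).toNat + 1, (j - 1) / n, by omega, by omega, ?_⟩
  push_cast
  rw [Int.toNat_of_nonneg h1]
  omega

lemma eq_of_residues {f g : ℤ → ℤ} (hn : 0 < n)
    (hf : ∀ j : ℤ, f (j + n) = f j + n) (hg : ∀ j : ℤ, g (j + n) = g j + n)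
    (h : ∀ r : ℕ, 1 ≤ r → r ≤ n → f r = g r) : f = g := by
  funext j
  obtain ⟨r, q, hr1, hrn, rfl⟩ := decomp hn j
  rw [periodic_mul hf q, periodic_mul hg q, h r hr1 hrn]

end SkewAux


namespace SkewAux

open scoped Classical in
/-- The value of `f_{λ/μ}` at a residue representative `r ∈ [1,n]`. -/
noncomputable def skewVal (n k : ℕ) (l m : ℕ → ℕ) (r : ℕ) : ℤ :=
  if h : ∃ i, (1 ≤ i ∧ i ≤ k) ∧ bvec n k m i = r then
    ((n - k - l h.choose + h.choose : ℕ) : ℤ) + (n : ℤ)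
  else if h2 : ∃ a, (1 ≤ a ∧ a ≤ n - k) ∧ a + colHeight n k m a = r then
    ((h2.choose + colHeight n k l h2.choose : ℕ) : ℤ)
  else (r : ℤ)

open scoped Classical in
/-- The inverse value map. -/
noncomputable def skewValInv (n k : ℕ) (l m : ℕ → ℕ) (r : ℕ) : ℤ :=
  if h : ∃ i, (1 ≤ i ∧ i ≤ k) ∧ bvec n k l i = r then
    ((bvec n k m h.choose : ℕ) : ℤ) - (n : ℤ)
  else if h2 : ∃ a, (1 ≤ a ∧ a ≤ n - k) ∧ a + colHeight n k l a = r then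
    ((h2.choose + colHeight n k m h2.choose : ℕ) : ℤ)
  else (r : ℤ)

noncomputable def skewF (n k : ℕ) (l m : ℕ → ℕ) (j : ℤ) : ℤ :=
  (n : ℤ) * ((j - 1) / (n : ℤ)) + skewVal n k l m (((j - 1) % (n : ℤ)).toNat + 1)

noncomputable def skewG (n k : ℕ) (l m : ℕ → ℕ) (j : ℤ) : ℤ :=
  (n : ℤ) * ((j - 1) / (n : ℤ)) + skewValInv n k l m (((j - 1) % (n : ℤ)).toNat + 1)

variable {n k : ℕ} {l m : ℕ → ℕ}

lemma skewF_periodic (hn : 0 < n) (j : ℤ) :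
    skewF n k l m (j + n) = skewF n k l m j + n := by
  have hn' : (n : ℤ) ≠ 0 := by exact_mod_cast hn.ne'
  unfold skewF
  have h1 : (j + n - 1) % n = (j - 1) % n := by
    have he : j + (n : ℤ) - 1 = (j - 1) + 1 * n := by ring
    rw [he, Int.add_mul_emod_self_right]
  have h2 : (j + n - 1) / n = (j - 1) / n + 1 := by
    have he : j + (n : ℤ) - 1 = (j - 1) + 1 * n := by ring
    rw [he, Int.add_mul_ediv_right _ _ hn']
  rw [h1, h2]
  ring

lemma skewG_periodic (hn : 0 < n) (j : ℤ) :
    skewG n k l m (j + n) = skewG n k l m j + n := by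
  have hn' : (n : ℤ) ≠ 0 := by exact_mod_cast hn.ne'
  unfold skewG
  have h1 : (j + n - 1) % n = (j - 1) % n := by
    have he : j + (n : ℤ) - 1 = (j - 1) + 1 * n := by ring
    rw [he, Int.add_mul_emod_self_right]
  have h2 : (j + n - 1) / n = (j - 1) / n + 1 := by
    have he : j + (n : ℤ) - 1 = (j - 1) + 1 * n := by ring
    rw [he, Int.add_mul_ediv_right _ _ hn']
  rw [h1, h2]
  ring

lemma skewF_nat (hn : 0 < n) {r : ℕ} (h1 : 1 ≤ r) (h2 : r ≤ n) :
    skewF n k l m r = skewVal n k l m r := by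
  unfold skewF
  have e1 : ((r : ℤ) - 1) % n = (r : ℤ) - 1 := Int.emod_eq_of_lt (by omega) (by omega)
  have e2 : ((r : ℤ) - 1) / n = 0 := Int.ediv_eq_zero_of_lt (by omega) (by omega)
  rw [e1, e2]
  have e3 : ((r : ℤ) - 1).toNat + 1 = r := by omega
  rw [e3]
  ring

lemma skewG_nat (hn : 0 < n) {r : ℕ} (h1 : 1 ≤ r) (h2 : r ≤ n) :
    skewG n k l m r = skewValInv n k l m r := by
  unfold skewG
  have e1 : ((r : ℤ) - 1) % n = (r : ℤ) - 1 := Int.emod_eq_of_lt (by omega) (by omega)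
  have e2 : ((r : ℤ) - 1) / n = 0 := Int.ediv_eq_zero_of_lt (by omega) (by omega)
  rw [e1, e2]
  have e3 : ((r : ℤ) - 1).toNat + 1 = r := by omega
  rw [e3]
  ring

lemma skewVal_bvec (hmmono : ∀ i j, 1 ≤ i → i ≤ j → j ≤ k → m j ≤ m i)
    {i : ℕ} (hi1 : 1 ≤ i) (hik : i ≤ k) :
    skewVal n k l m (bvec n k m i) = ((n - k - l i + i : ℕ) : ℤ) + (n : ℤ) := by
  unfold skewVal
  have h : ∃ i', (1 ≤ i' ∧ i' ≤ k) ∧ bvec n k m i' = bvec n k m i := ⟨i, ⟨hi1, hik⟩, rfl⟩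
  rw [dif_pos h]
  have hc := h.choose_spec
  have : h.choose = i := bvec_inj hmmono hc.1.1 hc.1.2 hi1 hik hc.2
  rw [this]

lemma skewVal_addCol (hmmono : ∀ i j, 1 ≤ i → i ≤ j → j ≤ k → m j ≤ m i)
    {a : ℕ} (ha1 : 1 ≤ a) (han : a ≤ n - k) :
    skewVal n k l m (a + colHeight n k m a) =
      ((a + colHeight n k l a : ℕ) : ℤ) := by
  unfold skewVal
  have hneg : ¬ ∃ i', (1 ≤ i' ∧ i' ≤ k) ∧ bvec n k m i' = a + colHeight n k m a := by
    rintro ⟨i', ⟨hi1, hik⟩, hbi⟩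
    exact disjoint_ab hmmono ha1 han hi1 hik hbi.symm
  rw [dif_neg hneg]
  have h2 : ∃ a', (1 ≤ a' ∧ a' ≤ n - k) ∧
      a' + colHeight n k m a' = a + colHeight n k m a := ⟨a, ⟨ha1, han⟩, rfl⟩
  rw [dif_pos h2]
  have hc := h2.choose_spec
  have : h2.choose = a := addCol_inj n k m hc.2
  rw [this]

lemma skewValInv_bvec (hlmono : ∀ i j, 1 ≤ i → i ≤ j → j ≤ k → l j ≤ l i)
    {i : ℕ} (hi1 : 1 ≤ i) (hik : i ≤ k) :
    skewValInv n k l m (bvec n k l i) = ((bvec n k m i : ℕ) : ℤ) - (n : ℤ) := by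
  unfold skewValInv
  have h : ∃ i', (1 ≤ i' ∧ i' ≤ k) ∧ bvec n k l i' = bvec n k l i := ⟨i, ⟨hi1, hik⟩, rfl⟩
  rw [dif_pos h]
  have hc := h.choose_spec
  have : h.choose = i := bvec_inj hlmono hc.1.1 hc.1.2 hi1 hik hc.2
  rw [this]

lemma skewValInv_addCol (hlmono : ∀ i j, 1 ≤ i → i ≤ j → j ≤ k → l j ≤ l i)
    {a : ℕ} (ha1 : 1 ≤ a) (han : a ≤ n - k) :
    skewValInv n k l m (a + colHeight n k l a) =
      ((a + colHeight n k m a : ℕ) : ℤ) := by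
  unfold skewValInv
  have hneg : ¬ ∃ i', (1 ≤ i' ∧ i' ≤ k) ∧ bvec n k l i' = a + colHeight n k l a := by
    rintro ⟨i', ⟨hi1, hik⟩, hbi⟩
    exact disjoint_ab hlmono ha1 han hi1 hik hbi.symm
  rw [dif_neg hneg]
  have h2 : ∃ a', (1 ≤ a' ∧ a' ≤ n - k) ∧
      a' + colHeight n k l a' = a + colHeight n k l a := ⟨a, ⟨ha1, han⟩, rfl⟩
  rw [dif_pos h2]
  have hc := h2.choose_spec
  have : h2.choose = a := addCol_inj n k l hc.2
  rw [this]

end SkewAux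

theorem stmt8 (n k : ℕ) (l m : ℕ → ℕ)
    (hk : 0 < k) (hkn : k < n)
    (hlmono : ∀ i j, 1 ≤ i → i ≤ j → j ≤ k → l j ≤ l i)
    (hl1 : l 1 ≤ n - k)
    (hmmono : ∀ i j, 1 ≤ i → i ≤ j → j ≤ k → m j ≤ m i)
    (hml : ∀ i, 1 ≤ i → i ≤ k → m i ≤ l i)
    :
    (∀ j ∈ Finset.Icc 1 n,
      Xor' (∃! i : ℕ, (1 ≤ i ∧ i ≤ k) ∧ bvec n k m i = j)
           (∃! a : ℕ, (1 ≤ a ∧ a ≤ n - k) ∧ a + colHeight n k m a = j)) ∧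
    (∃! f : ℤ → ℤ, IsSkewBAF n k l m f) ∧
    (∀ f : ℤ → ℤ, IsSkewBAF n k l m f → IsBoundedAffinePerm n k f) := by
  have hn : 0 < n := lt_trans hk hkn
  have hlb : ∀ i, 1 ≤ i → i ≤ k → l i ≤ n - k := fun i h1 h2 =>
    le_trans (hlmono 1 i le_rfl h1 h2) hl1
  have hmb : ∀ i, 1 ≤ i → i ≤ k → m i ≤ n - k := fun i h1 h2 =>
    le_trans (hml i h1 h2) (hlb i h1 h2)
  open SkewAux in
  refine ⟨?_, ?_, ?_⟩
  · -- Part 1: Xor'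
    intro j hj
    rw [Finset.mem_Icc] at hj
    unfold Xor'
    rcases partition_cases hmmono hkn.le hj.1 hj.2 with
      ⟨i, ⟨hi1, hik⟩, hbi⟩ | ⟨a, ⟨ha1, han⟩, hca⟩
    · left
      refine ⟨⟨i, ⟨⟨hi1, hik⟩, hbi⟩, ?_⟩, ?_⟩
      · rintro i' ⟨⟨h1', h2'⟩, h3'⟩
        exact bvec_inj hmmono h1' h2' hi1 hik (h3'.trans hbi.symm)
      · rintro ⟨a, ⟨⟨ha1, han⟩, hca⟩, -⟩
        exact disjoint_ab hmmono ha1 han hi1 hik (hca.trans hbi.symm)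
    · right
      refine ⟨⟨a, ⟨⟨ha1, han⟩, hca⟩, ?_⟩, ?_⟩
      · rintro a' ⟨⟨_, _⟩, h3'⟩
        exact addCol_inj n k m (h3'.trans hca.symm)
      · rintro ⟨i, ⟨⟨hi1, hik⟩, hbi⟩, -⟩
        exact disjoint_ab hmmono ha1 han hi1 hik (hca.trans hbi.symm)
  · -- Part 2: unique existence of f
    refine ⟨skewF n k l m, ⟨?_, ?_, skewF_periodic hn⟩, ?_⟩
    · intro a h1 h2
      have hm := addCol_mem (p := m) (a := a) hkn.le h1 h2
      rw [skewF_nat hn hm.1 hm.2, skewVal_addCol hmmono h1 h2]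
    · intro i h1 h2
      have hm := bvec_mem (p := m) (i := i) hkn.le h1 h2
      rw [skewF_nat hn hm.1 hm.2, skewVal_bvec hmmono h1 h2]
    · intro g hg
      refine eq_of_residues hn hg.2.2 (fun j => skewF_periodic hn j) ?_
      intro r h1 h2
      rcases partition_cases hmmono hkn.le h1 h2 with
        ⟨i, ⟨hi1, hik⟩, rfl⟩ | ⟨a, ⟨ha1, han⟩, rfl⟩
      · rw [hg.2.1 i hi1 hik]
        have hm := bvec_mem (p := m) (i := i) hkn.le hi1 hik
        rw [skewF_nat hn hm.1 hm.2, skewVal_bvec hmmono hi1 hik]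
      · rw [hg.1 a ha1 han]
        have hm := addCol_mem (p := m) (a := a) hkn.le ha1 han
        rw [skewF_nat hn hm.1 hm.2, skewVal_addCol hmmono ha1 han]
  · -- Part 3: bounded affine permutation
    rintro f ⟨hfA, hfB, hfP⟩
    refine ⟨?_, hfP, ?_, ?_⟩
    · -- bijective
      have hgf : (fun x => skewG n k l m (f x)) = id := by
        refine eq_of_residues hn ?_ (fun j => by simp) ?_
        · intro j
          show skewG n k l m (f (j + (n:ℤ))) = skewG n k l m (f j) + (n:ℤ)
          rw [hfP, skewG_periodic hn]
        · intro r h1 h2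
          simp only [id_eq]
          rcases partition_cases hmmono hkn.le h1 h2 with
            ⟨i, ⟨hi1, hik⟩, rfl⟩ | ⟨a, ⟨ha1, han⟩, rfl⟩
          · rw [hfB i hi1 hik]
            have hbl : (n - k - l i + i : ℕ) = bvec n k l i := rfl
            rw [hbl]
            have hm := bvec_mem (p := l) (i := i) hkn.le hi1 hik
            have hper := skewG_periodic (n := n) (k := k) (l := l) (m := m) hn ((bvec n k l i : ℕ) : ℤ)
            rw [hper, skewG_nat hn hm.1 hm.2, skewValInv_bvec hlmono hi1 hik]
            ring
          · rw [hfA a ha1 han]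
            have hm := addCol_mem (p := l) (a := a) hkn.le ha1 han
            rw [skewG_nat hn hm.1 hm.2, skewValInv_addCol hlmono ha1 han]
      have hfg : (fun y => f (skewG n k l m y)) = id := by
        refine eq_of_residues hn ?_ (fun j => by simp) ?_
        · intro j
          show f (skewG n k l m (j + (n:ℤ))) = f (skewG n k l m j) + (n:ℤ)
          rw [skewG_periodic hn, hfP]
        · intro r h1 h2
          simp only [id_eq]
          rcases partition_cases hlmono hkn.le h1 h2 with
            ⟨i, ⟨hi1, hik⟩, rfl⟩ | ⟨a, ⟨ha1, han⟩, rfl⟩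
          · have hm := bvec_mem (p := l) (i := i) hkn.le hi1 hik
            rw [skewG_nat hn hm.1 hm.2, skewValInv_bvec hlmono hi1 hik]
            have h4 := hfP (((bvec n k m i : ℕ) : ℤ) - n)
            have e : ((bvec n k m i : ℕ) : ℤ) - n + n = ((bvec n k m i : ℕ) : ℤ) := by ring
            rw [e, hfB i hi1 hik] at h4
            have hbl : (n - k - l i + i : ℕ) = bvec n k l i := rfl
            rw [hbl] at h4
            omega
          · have hm := addCol_mem (p := l) (a := a) hkn.le ha1 han
            rw [skewG_nat hn hm.1 hm.2, skewValInv_addCol hlmono ha1 han,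
              hfA a ha1 han]
      exact Function.bijective_iff_has_inverse.mpr
        ⟨skewG n k l m, fun x => congrFun hgf x, fun y => congrFun hfg y⟩
    · -- bounds
      have key : ∀ r : ℕ, 1 ≤ r → r ≤ n → ((r : ℤ) ≤ f r ∧ f r ≤ (r : ℤ) + n) := by
        intro r h1 h2
        rcases partition_cases hmmono hkn.le h1 h2 with
          ⟨i, ⟨hi1, hik⟩, rfl⟩ | ⟨a, ⟨ha1, han⟩, rfl⟩
        · rw [hfB i hi1 hik]
          have h3 := hml i hi1 hik
          have h4 := hlb i hi1 hik
          unfold bvec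
          constructor <;> omega
        · rw [hfA a ha1 han]
          have h3 := colHeight_le_colHeight n k hml a
          have h4 := colHeight_le_k n k l a
          constructor <;> omega
      intro i
      obtain ⟨r, q, h1, h2, rfl⟩ := decomp hn i
      rw [periodic_mul hfP q]
      obtain ⟨k1, k2⟩ := key r h1 h2
      constructor <;> linarith
    · -- sum
      have hinj : ∀ x ∈ Finset.Icc 1 n, ∀ y ∈ Finset.Icc 1 n,
          (x : ℤ) = (y : ℤ) → x = y := fun x _ y _ h => by exact_mod_cast h
      have hIcc : Finset.Icc (1 : ℤ) (n : ℤ) =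
          (Finset.Icc 1 n).image (fun r : ℕ => (r : ℤ)) := by
        ext x
        simp only [Finset.mem_Icc, Finset.mem_image]
        constructor
        · intro hx
          exact ⟨x.toNat, ⟨by omega, by omega⟩, by omega⟩
        · rintro ⟨a, ha, rfl⟩
          omega
      rw [hIcc, Finset.sum_image hinj, ← partition_union hmmono hkn.le,
        Finset.sum_union (partition_disjoint hmmono)]
      have hinjB : ∀ x ∈ Finset.Icc 1 k, ∀ y ∈ Finset.Icc 1 k,
          bvec n k m x = bvec n k m y → x = y := by
        intro x hx y hy h
        rw [Finset.mem_Icc] at hx hy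
        exact bvec_inj hmmono hx.1 hx.2 hy.1 hy.2 h
      have hinjA : ∀ x ∈ Finset.Icc 1 (n - k), ∀ y ∈ Finset.Icc 1 (n - k),
          x + colHeight n k m x = y + colHeight n k m y → x = y :=
        fun x _ y _ h => addCol_inj n k m h
      rw [Finset.sum_image hinjB, Finset.sum_image hinjA]
      have e1 : ∀ i ∈ Finset.Icc 1 k,
          f ((bvec n k m i : ℕ) : ℤ) - ((bvec n k m i : ℕ) : ℤ) =
            (n : ℤ) + (m i : ℤ) - (l i : ℤ) := by
        intro i hi
        rw [Finset.mem_Icc] at hi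
        rw [hfB i hi.1 hi.2]
        have h3 := hml i hi.1 hi.2
        have h4 := hlb i hi.1 hi.2
        unfold bvec
        omega
      have e2 : ∀ a ∈ Finset.Icc 1 (n - k),
          f ((a + colHeight n k m a : ℕ) : ℤ) - ((a + colHeight n k m a : ℕ) : ℤ) =
            (colHeight n k l a : ℤ) - (colHeight n k m a : ℤ) := by
        intro a ha
        rw [Finset.mem_Icc] at ha
        rw [hfA a ha.1 ha.2]
        push_cast
        ring
      rw [Finset.sum_congr rfl e1, Finset.sum_congr rfl e2]
      have hsl := sum_colHeight (n := n) (k := k) (p := l) hlb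
      have hsm := sum_colHeight (n := n) (k := k) (p := m) hmb
      have A1 : ∑ i ∈ Finset.Icc 1 k, ((n : ℤ) + (m i : ℤ) - (l i : ℤ)) =
          (k : ℤ) * n + ((∑ i ∈ Finset.Icc 1 k, m i : ℕ) : ℤ)
            - ((∑ i ∈ Finset.Icc 1 k, l i : ℕ) : ℤ) := by
        rw [Finset.sum_sub_distrib, Finset.sum_add_distrib, Finset.sum_const,
          Nat.card_Icc]
        push_cast
        ring
      have A2 : ∑ a ∈ Finset.Icc 1 (n - k),
          ((colHeight n k l a : ℤ) - (colHeight n k m a : ℤ)) =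
          ((∑ a ∈ Finset.Icc 1 (n - k), colHeight n k l a : ℕ) : ℤ)
            - ((∑ a ∈ Finset.Icc 1 (n - k), colHeight n k m a : ℕ) : ℤ) := by
        rw [Finset.sum_sub_distrib]
        push_cast
        ring
      rw [A1, A2, hsl, hsm]
      ring
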